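/- Let 𝒲 be a Whitney covering of a domain Ω ⊂ ℝ^d, let g ∈ L^1_loc(ℝ^d) be nonnegative, let r > 0 and η > 0. Then for every cube Q ∈ 𝒲 one has ∑_{S∈𝒲 : D(Q,S) > r} (∫_S g(x) dx) / D(Q,S)^{d+η} ≤ C r^{−η} inf_{y∈Q} Mg(y), with C depending only on d and η. -/

import Mathlib

open MeasureTheory Metric Set
open scoped ENNReal NNReal Topology Classical

noncomputable section

namespace CZ

/-- We model `ℝ^d` as `Fin d → ℝ` (so that sup-norm balls are cubes). -/
abbrev Euc (d : ℕ) := Fin d → ℝ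

variable {d : ℕ}

/-- The order `|α|` of a multiindex `α ∈ ℕ^d`. -/
def mdeg (α : Fin d → ℕ) : ℕ := ∑ i, α i

/-- Partial derivative in the `i`-th coordinate direction. -/
def pder (i : Fin d) (f : Euc d → ℝ) : Euc d → ℝ := fun x => fderiv ℝ f x (Pi.single i 1)

/-- Iterated partial derivative `D^α` for a multiindex `α`. -/
def mderiv (α : Fin d → ℕ) (f : Euc d → ℝ) : Euc d → ℝ :=
  (List.finRange d).foldr (fun i g => (pder i)^[α i] g) f

/-- `g` is the `α`-th distributional (weak) derivative of `f` on `U`. -/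
def IsWeakDeriv (U : Set (Euc d)) (α : Fin d → ℕ) (f g : Euc d → ℝ) : Prop :=
  ∀ φ : Euc d → ℝ, ContDiff ℝ (⊤ : ℕ∞) φ → HasCompactSupport φ → tsupport φ ⊆ U →
    ∫ x in U, f x * mderiv α φ x = (-1 : ℝ) ^ mdeg α * ∫ x in U, g x * φ x

/-- A choice of the `α`-th weak derivative of `f` on `U` (junk value `0` if none exists). -/
def weakDeriv (U : Set (Euc d)) (α : Fin d → ℕ) (f : Euc d → ℝ) : Euc d → ℝ :=
  if h : ∃ g, IsWeakDeriv U α f g then h.choose else 0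

/-- Membership in the Sobolev space `W^{n,p}(U)`. -/
def MemSobolev (n : ℕ) (p : ℝ≥0∞) (U : Set (Euc d)) (f : Euc d → ℝ) : Prop :=
  MemLp f p (volume.restrict U) ∧
  ∀ α : Fin d → ℕ, mdeg α ≤ n → ∃ g, IsWeakDeriv U α f g ∧ MemLp g p (volume.restrict U)

/-- The Sobolev norm `∑_{|α| ≤ n} ‖D^α f‖_{L^p(U)}` (as an extended real). -/
def sobNorm (n : ℕ) (p : ℝ≥0∞) (U : Set (Euc d)) (f : Euc d → ℝ) : ℝ≥0∞ :=
  ∑' α : {α : Fin d → ℕ // mdeg α ≤ n}, eLpNorm (weakDeriv U α.1 f) p (volume.restrict U)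

/-- `|∇^n f|(x) = ∑_{|α| = n} |D^α f(x)|`, using weak derivatives on `U`. -/
def gradAbs (n : ℕ) (U : Set (Euc d)) (f : Euc d → ℝ) (x : Euc d) : ℝ :=
  ∑' α : {α : Fin d → ℕ // mdeg α = n}, |weakDeriv U α.1 f x|

/-- An axis-parallel cube, given by its center and side length. -/
structure Cube (d : ℕ) where
  center : Euc d
  side : ℝ

/-- The (closed) cube as a subset of `ℝ^d`. -/
def Cube.set (Q : Cube d) : Set (Euc d) := {y | ∀ i, |y i - Q.center i| ≤ Q.side / 2}

/-- The concentric dilation `rQ` of a cube. -/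
def Cube.dil (Q : Cube d) (r : ℝ) : Cube d := ⟨Q.center, r * Q.side⟩

/-- A dyadic cube of the standard dyadic grid. -/
def Cube.IsDyadic (Q : Cube d) : Prop :=
  ∃ k : ℤ, Q.side = (2 : ℝ) ^ (-k) ∧ ∀ i, ∃ m : ℤ, Q.center i = ((m : ℝ) + 1 / 2) * Q.side

/-- Distance between two sets. -/
def sdist (A B : Set (Euc d)) : ℝ := sInf ((fun q : Euc d × Euc d => dist q.1 q.2) '' (A ×ˢ B))

/-- The long distance `D(Q,S) = ℓ(Q) + ℓ(S) + dist(Q,S)`. -/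
def longDist (Q S : Cube d) : ℝ := Q.side + S.side + sdist Q.set S.set

/-- A Whitney covering of `Ω` with Whitney constant `Cw`: dyadic cubes with pairwise
disjoint interiors covering `Ω`, side length comparable to the distance to `∂Ω`,
neighbor cubes of comparable size, and finite superposition of the dilated cubes `10Q`. -/
structure WhitneyCovering (d : ℕ) (Cw : ℝ) (Ω : Set (Euc d)) where
  cubes : Set (Cube d)
  dyadic : ∀ Q ∈ cubes, Q.IsDyadic
  disj : cubes.Pairwise fun Q S => Disjoint (interior Q.set) (interior S.set)
  covers : ⋃ Q ∈ cubes, Q.set = Ω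
  Cw_pos : 0 < Cw
  dist_le : ∀ Q ∈ cubes, Cw * Q.side ≤ sdist Q.set (frontier Ω)
  le_dist : ∀ Q ∈ cubes, sdist Q.set (frontier Ω) ≤ 4 * Cw * Q.side
  neighbor : ∀ Q ∈ cubes, ∀ S ∈ cubes, (Q.set ∩ S.set).Nonempty → Q.side ≤ 2 * S.side
  finite_overlap : ∃ N : ℕ, ∀ x : Euc d,
    {Q | Q ∈ cubes ∧ x ∈ (Q.dil 10).set}.Finite ∧
    {Q | Q ∈ cubes ∧ x ∈ (Q.dil 10).set}.ncard ≤ N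

/-- A choice of a Whitney cube containing `x` (junk degenerate cube if there is none). -/
def cubeAt {Cw : ℝ} {Ω : Set (Euc d)} (𝒲 : WhitneyCovering d Cw Ω) (x : Euc d) : Cube d :=
  if h : ∃ Q ∈ 𝒲.cubes, x ∈ Q.set then h.choose else ⟨x, 0⟩

/-- An oriented Whitney covering: a Whitney covering together with a fixed central (root)
cube `Q₀` and a chain function assigning to each pair of cubes a chain of consecutive
neighboring Whitney cubes joining them. -/
structure OrientedWhitney (d : ℕ) (Cw : ℝ) (Ω : Set (Euc d)) extends
    WhitneyCovering d Cw Ω where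
  root : Cube d
  root_mem : root ∈ cubes
  chain : Cube d → Cube d → List (Cube d)
  chain_mem : ∀ Q ∈ cubes, ∀ S ∈ cubes, ∀ P ∈ chain Q S, P ∈ cubes
  chain_head : ∀ Q ∈ cubes, ∀ S ∈ cubes, (chain Q S).head? = some Q
  chain_last : ∀ Q ∈ cubes, ∀ S ∈ cubes, (chain Q S).getLast? = some S
  chain_adj : ∀ Q ∈ cubes, ∀ S ∈ cubes,
    (chain Q S).Chain' fun P P' => P ≠ P' ∧ (P.set ∩ P'.set).Nonempty

/-- The tree-like order on Whitney cubes: `S ≤ Q` iff `Q` lies on the chain `[S, Q₀]`. -/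
def OrientedWhitney.cle {Cw : ℝ} {Ω : Set (Euc d)} (OW : OrientedWhitney d Cw Ω)
    (S Q : Cube d) : Prop := Q ∈ OW.chain S OW.root

/-- The (uncentered) Hardy–Littlewood maximal function over cubes. -/
def maxFn (g : Euc d → ℝ) (x : Euc d) : ℝ≥0∞ :=
  ⨆ (Q : Cube d) (_ : x ∈ Q.set) (_ : 0 < Q.side),
    (∫⁻ y in Q.set, ENNReal.ofReal (g y)) / ENNReal.ofReal (Q.side ^ d)

/-- A smooth convolution Calderón–Zygmund kernel of order `n`:
`|∇^j K(x)| ≤ C_K / |x|^{d+j}` for `0 ≤ j ≤ n` and `x ≠ 0`. -/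
def IsCZKernel (d n : ℕ) (K : Euc d → ℝ) : Prop :=
  ContDiffOn ℝ n K {x : Euc d | x ≠ 0} ∧
  ∃ C : ℝ, 0 < C ∧ ∀ j : ℕ, j ≤ n → ∀ x : Euc d, x ≠ 0 →
    ‖iteratedFDerivWithin ℝ j K {x : Euc d | x ≠ 0} x‖ ≤ C / ‖x‖ ^ (d + j)

/-- A smooth convolution Calderón–Zygmund operator of order `n`: it has a smooth
convolution CZ kernel of order `n`, is bounded on `L^p(ℝ^d)` for every `1 < p < ∞`,
and is represented by its kernel off the support. -/
structure CZO (d n : ℕ) where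
  toFun : (Euc d → ℝ) → Euc d → ℝ
  kernel : Euc d → ℝ
  kernel_prop : IsCZKernel d n kernel
  bounded : ∀ p : ℝ, 1 < p → ∃ C : ℝ≥0∞, ∀ f : Euc d → ℝ,
    MemLp f (ENNReal.ofReal p) volume →
      MemLp (toFun f) (ENNReal.ofReal p) volume ∧
      eLpNorm (toFun f) (ENNReal.ofReal p) volume ≤ C * eLpNorm f (ENNReal.ofReal p) volume
  repr : ∀ p : ℝ, 1 < p → ∀ f : Euc d → ℝ, MemLp f (ENNReal.ofReal p) volume →
    ∀ x ∉ tsupport f, toFun f x = ∫ y in tsupport f, kernel (x - y) * f y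

/-- The truncated operator `T_Ω f = χ_Ω T(χ_Ω f)`. -/
def trunc {n : ℕ} (Ω : Set (Euc d)) (T : CZO d n) (f : Euc d → ℝ) : Euc d → ℝ :=
  Ω.indicator (T.toFun (Ω.indicator f))

/-- An operator `A` is bounded on the Sobolev space `W^{n,p}(Ω)`. -/
def BddOnSobolev (n : ℕ) (p : ℝ≥0∞) (Ω : Set (Euc d))
    (A : (Euc d → ℝ) → Euc d → ℝ) : Prop :=
  ∃ C : ℝ≥0∞, ∀ f, MemSobolev n p Ω f →
    MemSobolev n p Ω (A f) ∧ sobNorm n p Ω (A f) ≤ C * sobNorm n p Ω f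

/-- `P` is a polynomial of degree at most `m` whose derivatives of order `≤ m` have the
same averages on `3Q` as those of `f`. -/
def polyFits (m : ℕ) (Q : Cube d) (f : Euc d → ℝ) (P : MvPolynomial (Fin d) ℝ) : Prop :=
  P.totalDegree ≤ m ∧ ∀ β : Fin d → ℕ, mdeg β ≤ m →
    (⨍ x in (Q.dil 3).set, mderiv β (fun y => MvPolynomial.eval y P) x) =
      ⨍ x in (Q.dil 3).set, weakDeriv (interior (Q.dil 3).set) β f x

/-- The approximating polynomial `𝐏^m_{3Q} f` (junk value `0` if it does not exist). -/
def approxPoly (m : ℕ) (Q : Cube d) (f : Euc d → ℝ) : MvPolynomial (Fin d) ℝ :=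
  if h : ∃ P, polyFits m Q f P then h.choose else 0

/-- The measure `|∇^n f(x)|^p dx` restricted to `Ω`. -/
def gradMeasure (n : ℕ) (p : ℝ) (Ω : Set (Euc d)) (f : Euc d → ℝ) : Measure (Euc d) :=
  (volume.restrict Ω).withDensity fun x => ENNReal.ofReal (gradAbs n Ω f x ^ p)

/-- The dual exponent `p' = p/(p-1)`. -/
def pconj (p : ℝ) : ℝ := p / (p - 1)

/-- The distinguished "vertical" coordinate direction. -/
def vert (d : ℕ) [NeZero d] : Fin d := ⟨d - 1, Nat.sub_lt (NeZero.pos d) one_pos⟩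

/-- The cube of side `R` centered at the origin (in local coordinates). -/
def cube0 (d : ℕ) (R : ℝ) : Set (Euc d) := {y | ∀ i, |y i| ≤ R / 2}

/-- An `R`-window of the domain `Ω`, with Lipschitz constant `δ`:
a cube of side `R` centered at a boundary point, in which (after a rotation `rot`)
`Ω` coincides with the region above the graph of a `δ`-Lipschitz function. -/
structure Window (d : ℕ) [NeZero d] (δ R : ℝ) (Ω : Set (Euc d)) where
  center : Euc d
  center_mem : center ∈ frontier Ω
  rot : Euc d ≃ₗᵢ[ℝ] Euc d
  graphFn : Euc d → ℝ
  graphFn_horiz : ∀ y z : Euc d, (∀ i, i ≠ vert d → y i = z i) → graphFn y = graphFn z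
  graphFn_lip : ∀ y z : Euc d, |graphFn y - graphFn z| ≤ δ * ‖y - z‖
  graph : (fun x => rot (x - center)) '' Ω ∩ cube0 d (2 * R) =
    {y ∈ cube0 d (2 * R) | graphFn y < y (vert d)}

variable [NeZero d]

/-- The local coordinates map of a window. -/
def Window.toLoc {δ R : ℝ} {Ω : Set (Euc d)} (W : Window d δ R Ω) : Euc d → Euc d :=
  fun x => W.rot (x - W.center)

/-- The inverse of the local coordinates map of a window. -/
def Window.fromLoc {δ R : ℝ} {Ω : Set (Euc d)} (W : Window d δ R Ω) : Euc d → Euc d :=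
  fun y => W.rot.symm y + W.center

/-- The fixed small dilation factor `δ₀`. -/
def dil0 : ℝ := 1 / 4

/-- The core `δ₀𝒬` of a window. -/
def Window.core {δ R : ℝ} {Ω : Set (Euc d)} (W : Window d δ R Ω) : Set (Euc d) :=
  W.toLoc ⁻¹' cube0 d (dil0 * R)

/-- `Ω` is a (bounded) Lipschitz domain with character `(δ, R)`. -/
def LipschitzDomain (d : ℕ) [NeZero d] (δ R : ℝ) (Ω : Set (Euc d)) : Prop :=
  IsOpen Ω ∧ IsConnected Ω ∧ Bornology.IsBounded Ω ∧ 0 < δ ∧ 0 < R ∧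
  ∀ x ∈ frontier Ω, ∃ W : Window d δ R Ω, W.center = x

/-- A special (unbounded) Lipschitz domain: the region above the graph of a
`δ`-Lipschitz function, in the vertical direction. -/
def SpecialLipschitz (d : ℕ) [NeZero d] (δ : ℝ) (Ω : Set (Euc d)) : Prop :=
  0 < δ ∧ ∃ A : Euc d → ℝ, (∀ y z : Euc d, (∀ i, i ≠ vert d → y i = z i) → A y = A z) ∧
    (∀ y z : Euc d, |A y - A z| ≤ δ * ‖y - z‖) ∧ Ω = {y | A y < y (vert d)}

/-- The shadow `Sh(x)` of a point, relative to a window cube `𝒬` and a Whitney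
covering `𝒲` (in coordinates where the vertical direction is the last one). -/
def shadowPt {Cw : ℝ} {Ω : Set (Euc d)} (𝒲 : WhitneyCovering d Cw Ω) (𝒬 : Cube d)
    (x : Euc d) : Set (Euc d) :=
  {y | y ∈ 𝒬.set ∩ Ω ∧ y (vert d) < x (vert d) ∧
    ∀ i, i ≠ vert d → |x i - y i| ≤ (cubeAt 𝒲 x).side / 2}

/-- The vertically extended shadow `S̃h(x)` of a point. -/
def shadowPtExt {Cw : ℝ} {Ω : Set (Euc d)} (𝒲 : WhitneyCovering d Cw Ω) (𝒬 : Cube d)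
    (x : Euc d) : Set (Euc d) :=
  {y | y ∈ 𝒬.set ∩ Ω ∧ y (vert d) < x (vert d) + 2 * (cubeAt 𝒲 x).side ∧
    ∀ i, i ≠ vert d → |x i - y i| ≤ (cubeAt 𝒲 x).side / 2}

/-- `F` is the father of `Q`: the neighboring Whitney cube immediately above `Q`. -/
def IsFather {Cw : ℝ} {Ω : Set (Euc d)} (𝒲 : WhitneyCovering d Cw Ω) (F Q : Cube d) : Prop :=
  F ∈ 𝒲.cubes ∧ F ≠ Q ∧ (F.set ∩ Q.set).Nonempty ∧
  ∃ y ∈ F.set, Q.center (vert d) + Q.side / 2 < y (vert d) ∧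
    ∀ i, i ≠ vert d → y i = Q.center i

/-- The tree order on Whitney cubes: `P ≤ Q` iff `Q` is an iterated father of `P`. -/
def cubeLe {Cw : ℝ} {Ω : Set (Euc d)} (𝒲 : WhitneyCovering d Cw Ω) (P Q : Cube d) : Prop :=
  Relation.ReflTransGen (fun a b => IsFather 𝒲 b a) P Q

/-- The shadow of a Whitney cube: `Sh(Q) = ⋃_{P ≤ Q} P`. -/
def cubeShadow {Cw : ℝ} {Ω : Set (Euc d)} (𝒲 : WhitneyCovering d Cw Ω) (Q : Cube d) :
    Set (Euc d) :=
  ⋃ P ∈ {P | P ∈ 𝒲.cubes ∧ cubeLe 𝒲 P Q}, P.set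

/-- The left-hand side of the continuous `p`-Carleson condition at the point `a`:
`∫_{S̃h(a)} dist(x,∂Ω)^{(d-p)(1-p')} μ(Sh(x) ∩ Sh(a))^{p'} dx / dist(x,∂Ω)^d`. -/
def carlesonLHS (p : ℝ) {Cw : ℝ} {Ω : Set (Euc d)} (𝒲 : WhitneyCovering d Cw Ω)
    (𝒬 : Cube d) (μ : Measure (Euc d)) (a : Euc d) : ℝ≥0∞ :=
  ∫⁻ x in shadowPtExt 𝒲 𝒬 a,
    ENNReal.ofReal (infDist x (frontier Ω) ^ (((d : ℝ) - p) * (1 - pconj p))) *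
      μ (shadowPt 𝒲 𝒬 x ∩ shadowPt 𝒲 𝒬 a) ^ pconj p /
      ENNReal.ofReal (infDist x (frontier Ω) ^ (d : ℝ))

/-- The window cube of side `R` centered at the origin of the local coordinates. -/
def locWindowCube (d : ℕ) (R : ℝ) : Cube d := ⟨0, R⟩

/-- `μ` is a `p`-Carleson measure for the Lipschitz domain `Ω`: it is a finite (positive
Borel) measure and, for every window and every properly oriented Whitney covering
(expressed in the local coordinates of the window), the continuous Carleson inequality
holds at every point `a ∈ δ₀𝒬 ∩ Ω`. -/
def IsCarleson (p δ R : ℝ) (Ω : Set (Euc d)) (μ : Measure (Euc d)) : Prop :=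
  IsFiniteMeasure μ ∧
  ∃ C : ℝ≥0∞, ∀ (W : Window d δ R Ω) (Cw : ℝ)
    (𝒲 : WhitneyCovering d Cw (W.toLoc '' Ω)), ∀ a ∈ W.core ∩ Ω,
      carlesonLHS p 𝒲 (locWindowCube d R) (μ.map W.toLoc) (W.toLoc a)
        ≤ C * (μ.map W.toLoc) (shadowPt 𝒲 (locWindowCube d R) (W.toLoc a))

/-- The Whitney averaging function `𝒜f(x) = ∑_Q χ_Q(x) ⨍_{3Q} f`. -/
def avgFn {Cw : ℝ} {Ω : Set (Euc d)} (𝒲 : WhitneyCovering d Cw Ω) (f : Euc d → ℝ)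
    (x : Euc d) : ℝ :=
  ⨍ y in ((cubeAt 𝒲 x).dil 3).set, f y



section Statement5Aux

variable {d : ℕ}

lemma cube_center_mem {Q : Cube d} (h : 0 ≤ Q.side) : Q.center ∈ Q.set := by
  intro i; simpa using by positivity

lemma cube_set_eq_closedBall {Q : Cube d} (h : 0 ≤ Q.side) :
    Q.set = Metric.closedBall Q.center (Q.side / 2) := by
  ext x
  rw [Metric.mem_closedBall, dist_pi_le_iff (by positivity)]
  simp [Cube.set, Real.dist_eq]

lemma cube_dist_le {Q : Cube d} (h : 0 ≤ Q.side) {x y : Euc d}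
    (hx : x ∈ Q.set) (hy : y ∈ Q.set) : dist x y ≤ Q.side := by
  rw [dist_pi_le_iff h]
  intro i
  calc dist (x i) (y i) ≤ dist (x i) (Q.center i) + dist (Q.center i) (y i) := dist_triangle _ _ _
    _ ≤ Q.side / 2 + Q.side / 2 := by
        rw [Real.dist_eq, Real.dist_eq]
        exact add_le_add (hx i) (by rw [abs_sub_comm]; exact hy i)
    _ = Q.side := by ring

lemma cube_frontier_null {Q : Cube d} (h : 0 < Q.side) :
    volume (Q.set \ interior Q.set) = 0 := by
  have h1 : Q.set = Metric.closedBall Q.center (Q.side / 2) := cube_set_eq_closedBall h.le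
  have hb : Metric.ball Q.center (Q.side / 2) ⊆ interior Q.set :=
    interior_maximal (by rw [h1]; exact Metric.ball_subset_closedBall) Metric.isOpen_ball
  have hsub : Q.set \ interior Q.set ⊆
      Metric.closedBall Q.center (Q.side / 2) \ Metric.ball Q.center (Q.side / 2) := by
    intro x hx
    exact ⟨h1 ▸ hx.1, fun hxb => hx.2 (hb hxb)⟩
  refine measure_mono_null hsub ?_
  rw [measure_diff Metric.ball_subset_closedBall measurableSet_ball.nullMeasurableSet
    (by rw [Real.volume_pi_ball _ (by positivity)]; exact ENNReal.ofReal_ne_top),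
    Real.volume_pi_closedBall _ (by positivity), Real.volume_pi_ball _ (by positivity),
    tsub_self]

lemma sdist_nonneg (A B : Set (Euc d)) : 0 ≤ sdist A B := by
  apply Real.sInf_nonneg
  rintro x ⟨⟨a, b⟩, _, rfl⟩
  exact dist_nonneg

lemma sdist_exists {A B : Set (Euc d)} (hA : A.Nonempty) (hB : B.Nonempty) {ε : ℝ} (hε : 0 < ε) :
    ∃ a ∈ A, ∃ b ∈ B, dist a b < sdist A B + ε := by
  have hne : ((fun q : Euc d × Euc d => dist q.1 q.2) '' (A ×ˢ B)).Nonempty :=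
    ⟨_, ⟨(hA.choose, hB.choose), ⟨hA.choose_spec, hB.choose_spec⟩, rfl⟩⟩
  obtain ⟨x, ⟨⟨a, b⟩, ⟨ha, hb⟩, rfl⟩, hlt⟩ := Real.lt_sInf_add_pos hne hε
  exact ⟨a, ha, b, hb, hlt⟩

lemma dist_center_le {Q S : Cube d} (hq : 0 ≤ Q.side) (hs : 0 ≤ S.side) {x : Euc d}
    (hx : x ∈ S.set) : dist x Q.center ≤ longDist Q S := by
  refine le_of_forall_pos_le_add fun ε hε => ?_
  obtain ⟨a, ha, b, hb, hlt⟩ := sdist_exists ⟨Q.center, cube_center_mem hq⟩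
    ⟨S.center, cube_center_mem hs⟩ hε
  calc dist x Q.center ≤ dist x b + dist b a + dist a Q.center := dist_triangle4 _ _ _ _
    _ ≤ S.side + (sdist Q.set S.set + ε) + Q.side := by
        refine add_le_add (add_le_add (cube_dist_le hs hx hb) ?_) ?_
        · rw [dist_comm]; exact hlt.le
        · have := cube_dist_le hq ha (cube_center_mem hq)
          linarith [this]
    _ = longDist Q S + ε := by rw [longDist]; ring

lemma side_le_longDist {Q S : Cube d} (hq : 0 ≤ Q.side) (hs : 0 ≤ S.side) :
    Q.side ≤ longDist Q S := by
  have := sdist_nonneg Q.set S.set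
  rw [longDist]; linarith

lemma dyadic_side_pos {Q : Cube d} (h : Q.IsDyadic) : 0 < Q.side := by
  obtain ⟨k, hk, -⟩ := h
  rw [hk]; positivity

lemma dyadic_countable : {Q : Cube d | Q.IsDyadic}.Countable := by
  have : {Q : Cube d | Q.IsDyadic} ⊆
      Set.range (fun p : ℤ × (Fin d → ℤ) =>
        (⟨fun i => ((p.2 i : ℝ) + 1 / 2) * (2 : ℝ) ^ (-p.1), (2 : ℝ) ^ (-p.1)⟩ : Cube d)) := by
    rintro ⟨c, s⟩ ⟨k, hk, hm⟩
    refine ⟨⟨k, fun i => (hm i).choose⟩, ?_⟩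
    simp only [Cube.mk.injEq]
    constructor
    · funext i
      have := (hm i).choose_spec
      simp only at this ⊢
      rw [← hk]; exact this.symm
    · exact hk.symm
  exact (Set.countable_range _).mono this

lemma coeff_eq {d : ℕ} {η r : ℝ} (hη : 0 < η) (hr : 0 < r) (k : ℕ) :
    (4 * ((2:ℝ) ^ k * r)) ^ d / ((2:ℝ) ^ k * r) ^ ((d : ℝ) + η)
      = 4 ^ d / r ^ η * ((2:ℝ) ^ (-η)) ^ k := by
  have hl : (0:ℝ) < 2 ^ k * r := by positivity
  have h1 : ((2:ℝ) ^ k * r) ^ ((d : ℝ) + η) = (2 ^ k * r) ^ d * ((2:ℝ) ^ k * r) ^ η := by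
    rw [Real.rpow_add hl, Real.rpow_natCast]
  have h2 : ((2:ℝ) ^ k * r) ^ η = ((2:ℝ) ^ η) ^ k * r ^ η := by
    rw [Real.mul_rpow (by positivity) hr.le]
    congr 1
    rw [← Real.rpow_natCast (2:ℝ) k, ← Real.rpow_mul (by norm_num),
      ← Real.rpow_natCast ((2:ℝ) ^ η) k, ← Real.rpow_mul (by norm_num), mul_comm]
  have h3 : ((2:ℝ) ^ (-η)) ^ k = (((2:ℝ) ^ η) ^ k)⁻¹ := by
    rw [Real.rpow_neg (by norm_num), inv_pow]
  have h4 : (0:ℝ) < ((2:ℝ) ^ η) ^ k := by positivity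
  rw [h1, h2, h3, mul_pow]
  field_simp

end Statement5Aux

/-- Lemma 3.1 (1): for a Whitney covering `𝒲` of a domain `Ω ⊂ ℝ^d`,
a nonnegative `g ∈ L^1_loc`, `r > 0` and `η > 0`, for every `Q ∈ 𝒲`,
`∑_{S : D(Q,S) > r} (∫_S g) / D(Q,S)^{d+η} ≤ C r^{-η} inf_{y∈Q} Mg(y)`,
with `C` depending only on `d` and `η`. -/
theorem statement5 {d : ℕ} (η : ℝ) (hη : 0 < η) :
    ∃ C : ℝ, 0 < C ∧ ∀ (Ω : Set (Euc d)), IsOpen Ω → IsConnected Ω →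
      ∀ (Cw : ℝ) (𝒲 : WhitneyCovering d Cw Ω) (g : Euc d → ℝ),
        LocallyIntegrable g volume → (∀ x, 0 ≤ g x) →
        ∀ r : ℝ, 0 < r → ∀ Q ∈ 𝒲.cubes,
          (∑' S : {S : Cube d // S ∈ 𝒲.cubes ∧ r < longDist Q S},
              ENNReal.ofReal (∫ x in (S.1 : Cube d).set, g x) /
                ENNReal.ofReal (longDist Q S.1 ^ ((d : ℝ) + η)))
            ≤ ENNReal.ofReal (C / r ^ η) * ⨅ y ∈ Q.set, maxFn g y := by
  have hq2 : (0:ℝ) < 2 ^ (-η) := Real.rpow_pos_of_pos two_pos _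
  have hq1 : (2:ℝ) ^ (-η) < 1 :=
    Real.rpow_lt_one_of_one_lt_of_neg one_lt_two (neg_neg_of_pos hη)
  have h1q : (0:ℝ) < 1 - 2 ^ (-η) := by linarith
  refine ⟨4 ^ d / (1 - 2 ^ (-η)), by positivity, ?_⟩
  intro Ω hΩo hΩc Cw 𝒲 g hg hg0 r hr Q hQ
  have hsd : ∀ S ∈ 𝒲.cubes, 0 < S.side := fun S hS => dyadic_side_pos (𝒲.dyadic S hS)
  have hQs : 0 < Q.side := hsd Q hQ
  have hrη : (0:ℝ) < r ^ η := Real.rpow_pos_of_pos hr _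
  have hC : 0 < 4 ^ d / (1 - 2 ^ (-η)) / r ^ η := by positivity
  suffices H : ∀ y ∈ Q.set,
      (∑' S : {S : Cube d // S ∈ 𝒲.cubes ∧ r < longDist Q S},
          ENNReal.ofReal (∫ x in (S.1 : Cube d).set, g x) /
            ENNReal.ofReal (longDist Q S.1 ^ ((d : ℝ) + η)))
        ≤ ENNReal.ofReal (4 ^ d / (1 - 2 ^ (-η)) / r ^ η) * maxFn g y by
    have hc0 : ENNReal.ofReal (4 ^ d / (1 - 2 ^ (-η)) / r ^ η) ≠ 0 := by
      simp only [ne_eq, ENNReal.ofReal_eq_zero, not_le]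
      exact hC
    rw [ENNReal.mul_iInf_of_ne hc0 ENNReal.ofReal_ne_top]
    refine le_iInf fun y => ?_
    rw [ENNReal.mul_iInf_of_ne hc0 ENNReal.ofReal_ne_top]
    exact le_iInf fun hy => H y hy
  intro y hy
  set T := {S : Cube d // S ∈ 𝒲.cubes ∧ r < longDist Q S} with hT
  have hcntset : {S : Cube d | S ∈ 𝒲.cubes ∧ r < longDist Q S}.Countable :=
    dyadic_countable.mono (fun S hS => 𝒲.dyadic S hS.1)
  haveI hcntT : Countable T := hcntset.to_subtype
  set body : T → ℝ≥0∞ := fun S =>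
    ENNReal.ofReal (∫ x in (S.1 : Cube d).set, g x) /
      ENNReal.ofReal (longDist Q S.1 ^ ((d : ℝ) + η)) with hbody
  set ι : T → ℕ := fun S => ⌊Real.logb 2 (longDist Q S.1 / r)⌋₊ with hι
  have hfib : ∀ S : T, 2 ^ ι S * r ≤ longDist Q S.1 ∧
      longDist Q S.1 < 2 * (2 ^ ι S * r) := by
    intro S
    have hrD : r < longDist Q S.1 := S.2.2
    have hD0 : 0 < longDist Q S.1 := hr.trans hrD
    have hx1 : 1 < longDist Q S.1 / r := (one_lt_div hr).2 hrD
    have hlog0 : 0 ≤ Real.logb 2 (longDist Q S.1 / r) := Real.logb_nonneg one_lt_two hx1.le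
    constructor
    · have h1 : (2:ℝ) ^ (ι S : ℝ) ≤ 2 ^ Real.logb 2 (longDist Q S.1 / r) :=
        Real.rpow_le_rpow_of_exponent_le one_le_two (Nat.floor_le hlog0)
      rw [Real.rpow_logb two_pos (by norm_num) (by positivity), Real.rpow_natCast] at h1
      have := mul_le_mul_of_nonneg_right h1 hr.le
      rwa [div_mul_cancel₀ _ hr.ne'] at this
    · have h2 : Real.logb 2 (longDist Q S.1 / r) < (ι S : ℝ) + 1 := Nat.lt_floor_add_one _
      have h3 : longDist Q S.1 / r < 2 ^ ((ι S : ℝ) + 1) := by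
        calc longDist Q S.1 / r = 2 ^ Real.logb 2 (longDist Q S.1 / r) :=
              (Real.rpow_logb two_pos (by norm_num) (by positivity)).symm
          _ < 2 ^ ((ι S : ℝ) + 1) := Real.rpow_lt_rpow_of_exponent_lt one_lt_two h2
      rw [show ((ι S : ℝ) + 1) = ((ι S + 1 : ℕ) : ℝ) by push_cast; ring,
        Real.rpow_natCast] at h3
      have h4 := (div_lt_iff₀ hr).1 h3
      calc longDist Q S.1 < 2 ^ (ι S + 1) * r := h4
        _ = 2 * (2 ^ ι S * r) := by ring
  have hk : ∀ k : ℕ, (∑' s : {S : T // ι S = k}, body s.1)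
      ≤ ENNReal.ofReal (4 ^ d / r ^ η * ((2:ℝ) ^ (-η)) ^ k) * maxFn g y := by
    intro k
    rcases isEmpty_or_nonempty {S : T // ι S = k} with hek | hek
    · rw [tsum_empty]; exact zero_le
    · obtain ⟨s₀⟩ := hek
      set ℓ : ℝ := 2 ^ k * r with hℓ
      have hℓ0 : 0 < ℓ := by positivity
      set B : Cube d := ⟨Q.center, 4 * ℓ⟩ with hB
      have hBs : 0 < B.side := by show (0:ℝ) < 4 * ℓ; positivity
      have hsub : ∀ s : {S : T // ι S = k}, (s.1.1 : Cube d).set ⊆ B.set := by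
        intro s x hx i
        have h1 := hfib s.1
        rw [s.2] at h1
        have h2 : dist x Q.center ≤ longDist Q s.1.1 :=
          dist_center_le hQs.le (hsd _ s.1.2.1).le hx
        have h3 : dist (x i) (Q.center i) ≤ dist x Q.center := dist_le_pi_dist x Q.center i
        rw [Real.dist_eq] at h3
        show |x i - Q.center i| ≤ (4 * ℓ) / 2
        calc |x i - Q.center i| ≤ longDist Q s.1.1 := h3.trans h2
          _ ≤ 2 * ℓ := h1.2.le
          _ = (4 * ℓ) / 2 := by ring
      have hQsub : Q.set ⊆ B.set := by
        intro x hx i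
        have h1 := hfib s₀.1
        rw [s₀.2] at h1
        have h2 : Q.side ≤ longDist Q s₀.1.1 :=
          side_le_longDist hQs.le (hsd _ s₀.1.2.1).le
        have h3 : |x i - Q.center i| ≤ Q.side / 2 := hx i
        show |x i - Q.center i| ≤ (4 * ℓ) / 2
        have h4 : longDist Q s₀.1.1 < 2 * ℓ := h1.2
        linarith
      have hyB : y ∈ B.set := hQsub hy
      have hBdne : ENNReal.ofReal (B.side ^ d) ≠ 0 := by
        simp only [ne_eq, ENNReal.ofReal_eq_zero, not_le]
        positivity
      have hmax : (∫⁻ x in B.set, ENNReal.ofReal (g x))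
          ≤ maxFn g y * ENNReal.ofReal (B.side ^ d) := by
        have h1 : (∫⁻ x in B.set, ENNReal.ofReal (g x)) / ENNReal.ofReal (B.side ^ d)
            ≤ maxFn g y := by
          unfold maxFn
          refine le_iSup_of_le B ?_
          rw [iSup_pos hyB, iSup_pos hBs]
        exact (ENNReal.div_le_iff hBdne ENNReal.ofReal_ne_top).1 h1
      have hℓd : (0:ℝ) < ℓ ^ ((d:ℝ) + η) := Real.rpow_pos_of_pos hℓ0 _
      have hterm : ∀ s : {S : T // ι S = k}, body s.1
          ≤ (∫⁻ x in interior (s.1.1 : Cube d).set, ENNReal.ofReal (g x)) *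
            (ENNReal.ofReal (ℓ ^ ((d:ℝ) + η)))⁻¹ := by
        intro s
        have hS : (s.1.1 : Cube d) ∈ 𝒲.cubes := s.1.2.1
        have hDs := hfib s.1
        rw [s.2] at hDs
        have hint : IntegrableOn g (s.1.1 : Cube d).set volume := by
          apply hg.integrableOn_isCompact
          rw [cube_set_eq_closedBall (hsd _ hS).le]
          exact isCompact_closedBall _ _
        have hae : ((s.1.1 : Cube d).set : Set (Euc d)) =ᵐ[volume]
            interior (s.1.1 : Cube d).set := by
          rw [MeasureTheory.ae_eq_set]
          refine ⟨cube_frontier_null (hsd _ hS), ?_⟩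
          rw [Set.diff_eq_empty.2 interior_subset]
          exact measure_empty
        have h1 : ENNReal.ofReal (∫ x in (s.1.1 : Cube d).set, g x)
            = ∫⁻ x in interior (s.1.1 : Cube d).set, ENNReal.ofReal (g x) := by
          rw [MeasureTheory.ofReal_integral_eq_lintegral_ofReal hint
            (Filter.Eventually.of_forall fun x => hg0 x), setLIntegral_congr hae]
        have h2 : ENNReal.ofReal (ℓ ^ ((d:ℝ) + η))
            ≤ ENNReal.ofReal (longDist Q s.1.1 ^ ((d:ℝ) + η)) :=
          ENNReal.ofReal_le_ofReal (Real.rpow_le_rpow hℓ0.le hDs.1 (by positivity))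
        rw [hbody]
        simp only []
        rw [div_eq_mul_inv, h1]
        exact mul_le_mul' le_rfl (ENNReal.inv_le_inv.2 h2)
      calc (∑' s : {S : T // ι S = k}, body s.1)
          ≤ ∑' s : {S : T // ι S = k},
              (∫⁻ x in interior (s.1.1 : Cube d).set, ENNReal.ofReal (g x)) *
                (ENNReal.ofReal (ℓ ^ ((d:ℝ) + η)))⁻¹ := ENNReal.tsum_le_tsum hterm
        _ = (∑' s : {S : T // ι S = k},
              ∫⁻ x in interior (s.1.1 : Cube d).set, ENNReal.ofReal (g x)) *
                (ENNReal.ofReal (ℓ ^ ((d:ℝ) + η)))⁻¹ := ENNReal.tsum_mul_right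
        _ = (∫⁻ x in ⋃ s : {S : T // ι S = k}, interior (s.1.1 : Cube d).set,
              ENNReal.ofReal (g x)) * (ENNReal.ofReal (ℓ ^ ((d:ℝ) + η)))⁻¹ := by
            rw [lintegral_iUnion (fun s => isOpen_interior.measurableSet) ?_]
            intro s t hst
            have hne : (s.1.1 : Cube d) ≠ t.1.1 :=
              fun h => hst (Subtype.ext (Subtype.ext h))
            exact (𝒲.disj s.1.2.1 t.1.2.1 hne)
        _ ≤ (∫⁻ x in B.set, ENNReal.ofReal (g x)) *
              (ENNReal.ofReal (ℓ ^ ((d:ℝ) + η)))⁻¹ := by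
            refine mul_le_mul' (lintegral_mono_set ?_) le_rfl
            exact Set.iUnion_subset fun s => interior_subset.trans (hsub s)
        _ ≤ (maxFn g y * ENNReal.ofReal (B.side ^ d)) *
              (ENNReal.ofReal (ℓ ^ ((d:ℝ) + η)))⁻¹ := mul_le_mul' hmax le_rfl
        _ = ENNReal.ofReal (4 ^ d / r ^ η * ((2:ℝ) ^ (-η)) ^ k) * maxFn g y := by
            rw [← ENNReal.ofReal_inv_of_pos hℓd, mul_assoc,
              ← ENNReal.ofReal_mul (by positivity)]
            have hc : B.side ^ d * (ℓ ^ ((d:ℝ) + η))⁻¹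
                = 4 ^ d / r ^ η * ((2:ℝ) ^ (-η)) ^ k := by
              have := coeff_eq (d := d) hη hr k
              rw [← hℓ] at this
              rw [show B.side = 4 * ℓ from rfl, ← this, div_eq_mul_inv]
            rw [hc, mul_comm]
  calc (∑' S : T, body S)
      = ∑' k : ℕ, ∑' s : {S : T // ι S = k}, body s.1 := by
        rw [← (Equiv.sigmaFiberEquiv ι).tsum_eq body, ENNReal.tsum_sigma']
        rfl
    _ ≤ ∑' k : ℕ, ENNReal.ofReal (4 ^ d / r ^ η * ((2:ℝ) ^ (-η)) ^ k) * maxFn g y :=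
        ENNReal.tsum_le_tsum hk
    _ = ENNReal.ofReal (4 ^ d / (1 - 2 ^ (-η)) / r ^ η) * maxFn g y := by
        have h1 : ∀ n : ℕ, ENNReal.ofReal (4 ^ d / r ^ η * ((2:ℝ) ^ (-η)) ^ n) * maxFn g y
            = ENNReal.ofReal (4 ^ d / r ^ η) * maxFn g y *
              (ENNReal.ofReal ((2:ℝ) ^ (-η))) ^ n := by
          intro n
          rw [ENNReal.ofReal_mul (by positivity), ENNReal.ofReal_pow hq2.le]
          ring
        rw [tsum_congr h1, ENNReal.tsum_mul_left, ENNReal.tsum_geometric,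
          ← ENNReal.ofReal_one, ← ENNReal.ofReal_sub _ hq2.le,
          ← ENNReal.ofReal_inv_of_pos h1q, mul_comm (ENNReal.ofReal (4 ^ d / r ^ η) * maxFn g y),
          ← mul_assoc, ← ENNReal.ofReal_mul (by positivity)]
        congr 2
        field_simp
end CZ
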